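/- Lemma 3 (optimal per-epoch structure, time-varying channel): Suppose (r*, l*) is a global minimizer of the time-varying energy E(r, l) = Σ_{n=1}^N ((e^{r_n} − 1)/g_n + ρ) l_n over the set of feasible schedules. Then every epoch n ∈ {1, …, N} uses one of three strategies: (i) l*_n = 0; (ii) r*_n = r_ee(g_n) and 0 < l*_n ≤ L_n; or (iii) r*_n > r_ee(g_n) and l*_n = L_n. Equivalently: for every n with l*_n > 0 one has r*_n ≥ r_ee(g_n), and for every n with l*_n > 0 and r*_n > r_ee(g_n) one has l*_n = L_n. -/

import Mathlib

open Real Finset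

/-- Transmit-power function `P(r) = (e^r - 1)/g` for channel power gain `g`. -/
noncomputable def P (g r : ℝ) : ℝ := (Real.exp r - 1) / g

/-- Energy-efficiency (energy-per-bit) ratio `ξ(r) = (P(r) + ρ)/r`. -/
noncomputable def xi (g ρ r : ℝ) : ℝ := (P g r + ρ) / r

/-- Scheduling data: `N ≥ 1` epochs of positive lengths, arrival epoch indices
`0 = α_0 < α_1 < ⋯ < α_A = N` with positive arrival amounts `a_0, …, a_{A-1}` and `a_A = 0`,
deadline epoch indices `0 < δ_1 < ⋯ < δ_D = N` with positive demands `d_1, …, d_D`. -/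
def SchedData (N A D : ℕ) (L : ℕ → ℝ) (α : ℕ → ℕ) (a : ℕ → ℝ)
    (δ : ℕ → ℕ) (d : ℕ → ℝ) : Prop :=
  1 ≤ N ∧ (∀ n ∈ Finset.Icc 1 N, 0 < L n) ∧
  α 0 = 0 ∧ α A = N ∧ (∀ i < A, α i < α (i + 1)) ∧
  (∀ i < A, 0 < a i) ∧ a A = 0 ∧
  0 < δ 1 ∧ δ D = N ∧ (∀ j, 1 ≤ j → j < D → δ j < δ (j + 1)) ∧
  (∀ j ∈ Finset.Icc 1 D, 0 < d j)

/-- Feasibility of a schedule `(r, l)`: box constraints, causality constraints and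
deadline constraints. -/
def Feasible (N A D : ℕ) (L : ℕ → ℝ) (α : ℕ → ℕ) (a : ℕ → ℝ)
    (δ : ℕ → ℕ) (d : ℕ → ℝ) (r l : ℕ → ℝ) : Prop :=
  (∀ n ∈ Finset.Icc 1 N, 0 ≤ r n ∧ 0 ≤ l n ∧ l n ≤ L n) ∧
  (∀ i ∈ Finset.Icc 1 A, ∑ n ∈ Finset.Icc 1 (α i), r n * l n ≤ ∑ k ∈ Finset.range i, a k) ∧
  (∀ j ∈ Finset.Icc 1 D, ∑ k ∈ Finset.Icc 1 j, d k ≤ ∑ n ∈ Finset.Icc 1 (δ j), r n * l n)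

/-- `xi g ρ` has derivative `(r e^r - e^r + 1 - gρ)/(g r²)` at any `r > 0`. -/
lemma xi_hasDerivAt (g ρ : ℝ) (hg : 0 < g) (r : ℝ) (hr : 0 < r) :
    HasDerivAt (xi g ρ) ((r * Real.exp r - Real.exp r + 1 - g * ρ) / (g * r ^ 2)) r := by
  have h1 : HasDerivAt (fun x : ℝ => (Real.exp x - 1) / g + ρ) (Real.exp r / g) r :=
    (((Real.hasDerivAt_exp r).sub_const 1).div_const g).add_const ρ
  have h2 := h1.div (hasDerivAt_id r) (ne_of_gt hr)
  have heq : (Real.exp r / g * id r - ((Real.exp r - 1) / g + ρ) * 1) / (id r) ^ 2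
      = (r * Real.exp r - Real.exp r + 1 - g * ρ) / (g * r ^ 2) := by
    have hg' : g ≠ 0 := hg.ne'
    simp only [id]
    field_simp
    ring
  rw [heq] at h2
  exact h2

/-- If `ree > 0` is the strict global minimizer of `xi g ρ` over `(0,∞)`,
then `xi g ρ` is strictly monotone on `[ree, ∞)`. -/
lemma xi_strictMonoOn (g ρ re : ℝ) (hg : 0 < g) (hre : 0 < re)
    (hmin : ∀ r : ℝ, 0 < r → r ≠ re → xi g ρ re < xi g ρ r) :
    StrictMonoOn (xi g ρ) (Set.Ici re) := by
  -- local minimum at re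
  have hloc : IsLocalMin (xi g ρ) re := by
    filter_upwards [eventually_gt_nhds hre] with r hr
    rcases eq_or_ne r re with h | h
    · simp [h]
    · exact (hmin r hr h).le
  have h0 : re * Real.exp re - Real.exp re + 1 - g * ρ = 0 := by
    have hz := hloc.hasDerivAt_eq_zero (xi_hasDerivAt g ρ hg re hre)
    rcases div_eq_zero_iff.mp hz with h | h
    · exact h
    · exfalso
      have : (0:ℝ) < g * re ^ 2 := by positivity
      exact this.ne' h
  -- φ(x) = x e^x - e^x + 1 - gρ is strictly monotone on [0,∞)
  have hφderiv : ∀ x : ℝ, HasDerivAt (fun x : ℝ => x * Real.exp x - Real.exp x + 1 - g * ρ)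
      (x * Real.exp x) x := by
    intro x
    have := ((((hasDerivAt_id x).mul (Real.hasDerivAt_exp x)).sub
      (Real.hasDerivAt_exp x)).add_const 1).sub_const (g * ρ)
    refine this.congr_deriv ?_
    simp [mul_comm]
  have hφ : StrictMonoOn (fun x : ℝ => x * Real.exp x - Real.exp x + 1 - g * ρ)
      (Set.Ici (0:ℝ)) := by
    apply strictMonoOn_of_deriv_pos (convex_Ici 0)
    · exact fun x _ => (hφderiv x).continuousAt.continuousWithinAt
    · intro x hx
      rw [interior_Ici] at hx
      rw [(hφderiv x).deriv]
      exact mul_pos hx (Real.exp_pos x)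
  -- now xi strictly monotone on [re, ∞)
  apply strictMonoOn_of_deriv_pos (convex_Ici re)
  · exact fun x hx =>
      (xi_hasDerivAt g ρ hg x (lt_of_lt_of_le hre hx)).continuousAt.continuousWithinAt
  · intro x hx
    rw [interior_Ici] at hx
    have hxpos : 0 < x := hre.trans hx
    rw [(xi_hasDerivAt g ρ hg x hxpos).deriv]
    have hnum : 0 < x * Real.exp x - Real.exp x + 1 - g * ρ := by
      have := hφ (Set.mem_Ici.mpr hre.le) (Set.mem_Ici.mpr hxpos.le) hx
      simpa [h0] using this
    apply div_pos hnum
    positivity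

theorem lemma3_time_varying
    (ρ : ℝ) (hρ : 0 < ρ)
    (N A D : ℕ) (g : ℕ → ℝ) (hg : ∀ n ∈ Finset.Icc 1 N, 0 < g n)
    (L : ℕ → ℝ) (α : ℕ → ℕ) (a : ℕ → ℝ) (δ : ℕ → ℕ) (d : ℕ → ℝ)
    (hdata : SchedData N A D L α a δ d)
    (ree : ℕ → ℝ)
    (hree_pos : ∀ n ∈ Finset.Icc 1 N, 0 < ree n)
    (hree_min : ∀ n ∈ Finset.Icc 1 N, ∀ r : ℝ, 0 < r → r ≠ ree n →
      xi (g n) ρ (ree n) < xi (g n) ρ r)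
    (rs ls : ℕ → ℝ)
    (hfeas : Feasible N A D L α a δ d rs ls)
    (hopt : ∀ r l : ℕ → ℝ, Feasible N A D L α a δ d r l →
      ∑ n ∈ Finset.Icc 1 N, (P (g n) (rs n) + ρ) * ls n ≤
        ∑ n ∈ Finset.Icc 1 N, (P (g n) (r n) + ρ) * l n) :
    ∀ n ∈ Finset.Icc 1 N,
      (ls n = 0 ∨ (rs n = ree n ∧ 0 < ls n ∧ ls n ≤ L n) ∨ (ree n < rs n ∧ ls n = L n)) ∧
      (0 < ls n → ree n ≤ rs n) ∧
      (0 < ls n → ree n < rs n → ls n = L n) := by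
  intro n hn
  obtain ⟨hbox, hcaus, hdead⟩ := hfeas
  obtain ⟨hrs0, hls0, hlsL⟩ := hbox n hn
  have hLp : 0 < L n := hdata.2.1 n hn
  have hgn : 0 < g n := hg n hn
  have hreen : 0 < ree n := hree_pos n hn
  -- key perturbation lemma
  have key : ∀ r' l' : ℝ, 0 ≤ r' → 0 ≤ l' → l' ≤ L n → r' * l' = rs n * ls n →
      (P (g n) (rs n) + ρ) * ls n ≤ (P (g n) r' + ρ) * l' := by
    intro r' l' hr' hl' hl'L hprodeq
    set r2 := Function.update rs n r' with hr2
    set l2 := Function.update ls n l' with hl2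
    have hpt : ∀ m, r2 m * l2 m = rs m * ls m := by
      intro m
      rcases eq_or_ne m n with h | h
      · subst h
        simp [hr2, hl2, Function.update_self, hprodeq]
      · simp [hr2, hl2, Function.update_of_ne h]
    have hfeas2 : Feasible N A D L α a δ d r2 l2 := by
      refine ⟨?_, ?_, ?_⟩
      · intro m hm
        rcases eq_or_ne m n with h | h
        · subst h
          simp only [hr2, hl2, Function.update_self]
          exact ⟨hr', hl', hl'L⟩
        · simp only [hr2, hl2, Function.update_of_ne h]
          exact hbox m hm
      · intro i hi
        calc ∑ m ∈ Finset.Icc 1 (α i), r2 m * l2 m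
            = ∑ m ∈ Finset.Icc 1 (α i), rs m * ls m :=
              Finset.sum_congr rfl fun m _ => hpt m
          _ ≤ _ := hcaus i hi
      · intro j hj
        refine le_trans (hdead j hj) (le_of_eq ?_)
        exact (Finset.sum_congr rfl fun m _ => (hpt m).symm)
    have hE := hopt r2 l2 hfeas2
    rw [Finset.sum_eq_sum_sdiff_singleton_add hn (fun m => (P (g m) (rs m) + ρ) * ls m),
        Finset.sum_eq_sum_sdiff_singleton_add hn (fun m => (P (g m) (r2 m) + ρ) * l2 m)] at hE
    have hrest : ∑ m ∈ Finset.Icc 1 N \ {n}, (P (g m) (r2 m) + ρ) * l2 m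
        = ∑ m ∈ Finset.Icc 1 N \ {n}, (P (g m) (rs m) + ρ) * ls m := by
      refine Finset.sum_congr rfl fun m hm => ?_
      have h : m ≠ n := by
        simpa using (Finset.mem_sdiff.mp hm).2
      simp [hr2, hl2, Function.update_of_ne h]
    rw [hrest] at hE
    simp only [hr2, hl2, Function.update_self] at hE
    linarith
  by_cases hls : ls n = 0
  · refine ⟨Or.inl hls, ?_, ?_⟩
    · intro h; rw [hls] at h; linarith
    · intro h; rw [hls] at h; linarith
  have hlsp : 0 < ls n := lt_of_le_of_ne hls0 (Ne.symm hls)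
  -- rs n > 0
  have hrsp : 0 < rs n := by
    rcases hrs0.lt_or_eq with h | h
    · exact h
    · exfalso
      have hk := key 0 0 le_rfl le_rfl hLp.le (by rw [← h, zero_mul, zero_mul])
      simp only [P, ← h, Real.exp_zero, sub_self, zero_div, zero_add, mul_zero] at hk
      nlinarith
  have hrsne : rs n ≠ 0 := hrsp.ne'
  -- Claim 1 : ree n ≤ rs n
  have hge : ree n ≤ rs n := by
    by_contra hlt
    push_neg at hlt
    have hl'lt : rs n * ls n / ree n < ls n := by
      rw [div_lt_iff₀ hreen]
      nlinarith
    have hk := key (ree n) (rs n * ls n / ree n) hreen.le (by positivity)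
      (by linarith) (by field_simp)
    have e1 : (P (g n) (rs n) + ρ) * ls n = xi (g n) ρ (rs n) * (rs n * ls n) := by
      rw [xi]; field_simp; try ring
    have e2 : (P (g n) (ree n) + ρ) * (rs n * ls n / ree n)
        = xi (g n) ρ (ree n) * (rs n * ls n) := by
      rw [xi]; field_simp; try ring
    rw [e1, e2] at hk
    have hb : 0 < rs n * ls n := mul_pos hrsp hlsp
    have hm := hree_min n hn (rs n) hrsp (ne_of_lt hlt)
    nlinarith
  -- Claim 2 : if ree n < rs n then ls n = L n
  have hfull : ree n < rs n → ls n = L n := by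
    intro hlt
    by_contra hne
    have hlsL' : ls n < L n := lt_of_le_of_ne hlsL hne
    have hb : 0 < rs n * ls n := mul_pos hrsp hlsp
    set r' := max (ree n) (rs n * ls n / L n) with hr'def
    have hr'pos : 0 < r' := lt_of_lt_of_le hreen (le_max_left _ _)
    have hr'lt : r' < rs n := by
      apply max_lt hlt
      rw [div_lt_iff₀ hLp]
      nlinarith
    have hl'le : rs n * ls n / r' ≤ L n := by
      rw [div_le_iff₀ hr'pos]
      have h1 : rs n * ls n / L n ≤ r' := le_max_right _ _
      have h2 : rs n * ls n / L n * L n ≤ r' * L n :=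
        mul_le_mul_of_nonneg_right h1 hLp.le
      rw [div_mul_cancel₀ _ hLp.ne'] at h2
      linarith
    have hk := key r' (rs n * ls n / r') hr'pos.le (by positivity) hl'le
      (by field_simp)
    have e1 : (P (g n) (rs n) + ρ) * ls n = xi (g n) ρ (rs n) * (rs n * ls n) := by
      rw [xi]; field_simp; try ring
    have e2 : (P (g n) r' + ρ) * (rs n * ls n / r')
        = xi (g n) ρ r' * (rs n * ls n) := by
      rw [xi]; field_simp; try ring
    rw [e1, e2] at hk
    have hmono := xi_strictMonoOn (g n) ρ (ree n) hgn hreen (hree_min n hn)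
    have hx : xi (g n) ρ r' < xi (g n) ρ (rs n) :=
      hmono (Set.mem_Ici.mpr (le_max_left _ _)) (Set.mem_Ici.mpr hlt.le) hr'lt
    nlinarith
  refine ⟨?_, fun _ => hge, fun _ => hfull⟩
  rcases eq_or_lt_of_le hge with h | h
  · exact Or.inr (Or.inl ⟨h.symm, hlsp, hlsL⟩)
  · exact Or.inr (Or.inr ⟨h, hfull h⟩)
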